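/- Let K ⊆ {0,1}^{2^{2k}} be a binary code, and define C ⊆ ℝ^{2^{2k}} to consist of the 2^{2k+1} vectors ±e_i (the standard basis vectors and their negatives) together with the vectors ((-1)^{c_1},...,(-1)^{c_{2^{2k}}})/2^k for c ∈ K. If K has minimum Hamming distance at least 2^{2k-1} - 2^{k-1} and does not contain any pair of complementary codewords, then C is a set of unit vectors with maximal inner product between distinct points at most 1/2^k, and |C| = |K| + 2^{2k+1}. -/

import Mathlib

open scoped RealInnerProductSpace

/-- The spherical code associated to a binary code `K ⊆ {0,1}^{2^{2k}}`: the vectors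
`±eᵢ` together with the scaled sign vectors `((-1)^{c₁}, …, (-1)^{c_m})/2^k` for `c ∈ K`. -/
noncomputable def kerdockSphericalCode (k : ℕ) (K : Finset (Fin (2 ^ (2 * k)) → Bool)) :
    Set (EuclideanSpace ℝ (Fin (2 ^ (2 * k)))) :=
  (Set.range fun i => EuclideanSpace.single i (1 : ℝ)) ∪
    (Set.range fun i => -EuclideanSpace.single i (1 : ℝ)) ∪
    ((fun (c : Fin (2 ^ (2 * k)) → Bool) => (WithLp.equiv 2 (Fin (2 ^ (2 * k)) → ℝ)).symm
      fun i => (if c i then (-1 : ℝ) else 1) / 2 ^ k) '' ↑K)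

/-- The sign vector of a codeword. -/
noncomputable def kerdockSign (k : ℕ) (c : Fin (2 ^ (2 * k)) → Bool) :
    EuclideanSpace ℝ (Fin (2 ^ (2 * k))) :=
  (WithLp.equiv 2 (Fin (2 ^ (2 * k)) → ℝ)).symm
    fun i => (if c i then (-1 : ℝ) else 1) / 2 ^ k

lemma kerdockSign_apply (k : ℕ) (c : Fin (2 ^ (2 * k)) → Bool) (i : Fin (2 ^ (2 * k))) :
    kerdockSign k c i = (if c i then (-1 : ℝ) else 1) / 2 ^ k := rfl

lemma kerdockSign_norm (k : ℕ) (c : Fin (2 ^ (2 * k)) → Bool) :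
    ‖kerdockSign k c‖ = 1 := by
  rw [EuclideanSpace.norm_eq]
  have hp : (1:ℝ) / 2 ^ (2 * k) = (1 / 2 ^ k) * (1 / 2 ^ k) := by
    rw [two_mul, pow_add]; ring
  have h : ∀ i, ‖kerdockSign k c i‖ ^ 2 = 1 / 2 ^ (2 * k) := by
    intro i
    rw [kerdockSign_apply, hp]
    rcases Bool.dichotomy (c i) with h | h <;>
      · rw [h]; norm_num [norm_div, Real.norm_eq_abs, abs_pow, sq]
  rw [Finset.sum_congr rfl fun i _ => h i, Finset.sum_const]
  simp

lemma kerdockSign_inner (k : ℕ) (c c' : Fin (2 ^ (2 * k)) → Bool) :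
    ⟪kerdockSign k c, kerdockSign k c'⟫
      = ((2 ^ (2 * k) : ℝ) - 2 * hammingDist c c') / 2 ^ (2 * k) := by
  rw [PiLp.inner_apply]
  simp only [kerdockSign_apply, RCLike.inner_apply, starRingEnd_apply, star_trivial]
  have h : ∀ i : Fin (2 ^ (2 * k)),
      (if c i then (-1 : ℝ) else 1) / 2 ^ k * ((if c' i then (-1 : ℝ) else 1) / 2 ^ k)
      = (1 - 2 * (if c i ≠ c' i then (1:ℝ) else 0)) / 2 ^ (2 * k) := by
    intro i
    rw [div_mul_div_comm, ← pow_add, two_mul k]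
    rcases Bool.dichotomy (c i) with h | h <;> rcases Bool.dichotomy (c' i) with h' | h' <;>
      · rw [h, h']; norm_num
  rw [Finset.sum_congr rfl fun i _ => (mul_comm _ _).trans (h i), ← Finset.sum_div]
  congr 1
  rw [Finset.sum_sub_distrib, Finset.sum_const, ← Finset.mul_sum, Finset.sum_boole]
  simp [hammingDist]

lemma kerdockSign_abs_apply (k : ℕ) (c : Fin (2 ^ (2 * k)) → Bool) (i : Fin (2 ^ (2 * k))) :
    |kerdockSign k c i| = 1 / 2 ^ k := by
  rw [kerdockSign_apply]
  rcases Bool.dichotomy (c i) with h | h <;> rw [h] <;> rw [abs_div] <;> norm_num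

lemma kerdockSign_injective (k : ℕ) : Function.Injective (kerdockSign k) := by
  intro c c' h
  funext i
  have := congrArg (fun (x : EuclideanSpace ℝ (Fin (2 ^ (2 * k)))) => x i) h
  simp only [kerdockSign_apply] at this
  have h2 : (0:ℝ) < 2 ^ k := by positivity
  rcases Bool.dichotomy (c i) with hc | hc <;> rcases Bool.dichotomy (c' i) with hc' | hc' <;>
    rw [hc, hc'] at this ⊢ <;> first
      | rfl
      | (exfalso; rw [div_eq_div_iff h2.ne' h2.ne'] at this; norm_num at this; nlinarith)

theorem stmt9 (k : ℕ) (hk : 1 ≤ k) (K : Finset (Fin (2 ^ (2 * k)) → Bool))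
    (hmin : ∀ c ∈ K, ∀ c' ∈ K, c ≠ c' →
      2 ^ (2 * k - 1) - 2 ^ (k - 1) ≤ hammingDist c c')
    (hmaxd : ∀ c ∈ K, ∀ c' ∈ K, c ≠ c' →
      hammingDist c c' ≤ 2 ^ (2 * k - 1) + 2 ^ (k - 1))
    (hcompl : ∀ c ∈ K, ∀ c' ∈ K, ¬∀ i, c' i = !c i) :
    (∀ x ∈ kerdockSphericalCode k K, ‖x‖ = 1) ∧
    (∀ x ∈ kerdockSphericalCode k K, ∀ y ∈ kerdockSphericalCode k K, x ≠ y →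
      ⟪x, y⟫ ≤ 1 / 2 ^ k) ∧
    (kerdockSphericalCode k K).ncard = K.card + 2 ^ (2 * k + 1) := by
  have h2k : (1:ℝ) < 2 ^ k := by
    calc (1:ℝ) < 2 := by norm_num
    _ = 2 ^ 1 := (pow_one 2).symm
    _ ≤ 2 ^ k := by exact pow_le_pow_right₀ (by norm_num) hk
  have hpos : (0:ℝ) < 2 ^ k := by positivity
  have hbpos : (0:ℝ) ≤ 1 / 2 ^ k := by positivity
  -- x ∈ code iff ...
  have hmem : ∀ x, x ∈ kerdockSphericalCode k K ↔
      (∃ i, EuclideanSpace.single i (1:ℝ) = x) ∨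
      (∃ i, -EuclideanSpace.single i (1:ℝ) = x) ∨
      (∃ c ∈ K, kerdockSign k c = x) := by
    intro x
    simp [kerdockSphericalCode, kerdockSign, Set.mem_union, Set.mem_range, Set.mem_image,
      or_assoc]
  -- e i ≠ sign vectors
  have hes : ∀ (i : Fin (2 ^ (2 * k))) (c : Fin (2 ^ (2 * k)) → Bool),
      EuclideanSpace.single i (1:ℝ) ≠ kerdockSign k c := by
    intro i c h
    have h1 : |(EuclideanSpace.single i (1:ℝ)) i| = |kerdockSign k c i| := by rw [h]
    rw [kerdockSign_abs_apply, EuclideanSpace.single_apply, if_pos rfl, abs_one,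
      eq_div_iff hpos.ne'] at h1
    nlinarith
  have hnes : ∀ (i : Fin (2 ^ (2 * k))) (c : Fin (2 ^ (2 * k)) → Bool),
      -EuclideanSpace.single i (1:ℝ) ≠ kerdockSign k c := by
    intro i c h
    have h1 : |(-EuclideanSpace.single i (1:ℝ)) i| = |kerdockSign k c i| := by rw [h]
    have happ : (-EuclideanSpace.single i (1:ℝ)) i = -1 := by
      simp [EuclideanSpace.single_apply]
    rw [happ, kerdockSign_abs_apply, abs_neg, abs_one, eq_div_iff hpos.ne'] at h1
    nlinarith
  have hen : ∀ (i j : Fin (2 ^ (2 * k))),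
      EuclideanSpace.single i (1:ℝ) ≠ -EuclideanSpace.single j (1:ℝ) := by
    intro i j h
    have := congrArg (fun (x : EuclideanSpace ℝ (Fin (2 ^ (2 * k)))) => x i) h
    simp only [EuclideanSpace.single_apply, if_pos rfl] at this
    have h2 : (-EuclideanSpace.single j (1:ℝ)) i = -(if i = j then (1:ℝ) else 0) := by
      simp [EuclideanSpace.single_apply]
    rw [h2] at this
    split_ifs at this <;> norm_num at this
  have hsingle_inj : Function.Injective
      (fun i : Fin (2 ^ (2 * k)) => EuclideanSpace.single i (1:ℝ)) := by
    intro i j h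
    by_contra hij
    have := congrArg (fun (x : EuclideanSpace ℝ (Fin (2 ^ (2 * k)))) => x i) h
    simp only [EuclideanSpace.single_apply, if_pos rfl, if_neg hij] at this
    norm_num at this
  refine ⟨?_, ?_, ?_⟩
  · -- norms
    intro x hx
    rcases (hmem x).1 hx with ⟨i, rfl⟩ | ⟨i, rfl⟩ | ⟨c, _, rfl⟩
    · simp [EuclideanSpace.norm_single]
    · simp [EuclideanSpace.norm_single]
    · exact kerdockSign_norm k c
  · -- inner products
    intro x hx y hy hxy
    -- inner of e's with sign vector is bounded
    have hsb : ∀ (c : Fin (2 ^ (2 * k)) → Bool) (i : Fin (2 ^ (2 * k))),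
        kerdockSign k c i ≤ 1 / 2 ^ k ∧ -(kerdockSign k c i) ≤ 1 / 2 ^ k := by
      intro c i
      constructor
      · calc kerdockSign k c i ≤ |kerdockSign k c i| := le_abs_self _
          _ = 1 / 2 ^ k := kerdockSign_abs_apply k c i
      · calc -(kerdockSign k c i) ≤ |kerdockSign k c i| := neg_le_abs _
          _ = 1 / 2 ^ k := kerdockSign_abs_apply k c i
    rcases (hmem x).1 hx with ⟨i, rfl⟩ | ⟨i, rfl⟩ | ⟨c, hc, rfl⟩ <;>
      rcases (hmem y).1 hy with ⟨j, rfl⟩ | ⟨j, rfl⟩ | ⟨c', hc', rfl⟩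
    · -- e i, e j
      have hij : i ≠ j := fun h => hxy (by rw [h])
      rw [EuclideanSpace.inner_single_left]
      simp only [map_one, one_mul, EuclideanSpace.single_apply, if_neg hij]
      linarith [hbpos]
    · -- e i, -e j
      rw [inner_neg_right, EuclideanSpace.inner_single_left]
      simp only [map_one, one_mul, EuclideanSpace.single_apply]
      split_ifs <;> linarith [hbpos]
    · -- e i, s c'
      rw [EuclideanSpace.inner_single_left]
      simpa using (hsb c' i).1
    · -- -e i, e j
      rw [inner_neg_left, EuclideanSpace.inner_single_left]
      simp only [map_one, one_mul, EuclideanSpace.single_apply]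
      split_ifs <;> linarith [hbpos]
    · -- -e i, -e j
      have hij : i ≠ j := fun h => hxy (by rw [h])
      rw [inner_neg_neg, EuclideanSpace.inner_single_left]
      simp only [map_one, one_mul, EuclideanSpace.single_apply, if_neg hij]
      linarith [hbpos]
    · -- -e i, s c'
      rw [inner_neg_left, EuclideanSpace.inner_single_left]
      simpa using (hsb c' i).2
    · -- s c, e j
      rw [EuclideanSpace.inner_single_right]
      simpa using (hsb c j).1
    · -- s c, -e j
      rw [inner_neg_right, EuclideanSpace.inner_single_right]
      simpa using (hsb c j).2
    · -- s c, s c'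
      have hcc : c ≠ c' := fun h => hxy (by rw [h])
      rw [kerdockSign_inner]
      have hd := hmin c hc c' hc' hcc
      -- nat inequality : 2^(2k) ≤ 2 * d + 2^k
      have hnat : 2 ^ (2 * k) ≤ 2 * hammingDist c c' + 2 ^ k := by
        have h1 : 2 ^ (2 * k - 1) ≤ hammingDist c c' + 2 ^ (k - 1) := by omega
        have h2 : 2 ^ (2 * k) = 2 * 2 ^ (2 * k - 1) := by
          rw [← pow_succ']
          congr 1
          omega
        have h3 : 2 ^ k = 2 * 2 ^ (k - 1) := by
          rw [← pow_succ']
          congr 1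
          omega
        omega
      have hcast : (2 ^ (2 * k) : ℝ) - 2 * hammingDist c c' ≤ 2 ^ k := by
        have := (Nat.cast_le (α := ℝ)).2 hnat
        push_cast at this
        linarith
      have hden : (0:ℝ) < 2 ^ (2 * k) := by positivity
      calc ((2 ^ (2 * k) : ℝ) - 2 * hammingDist c c') / 2 ^ (2 * k)
          ≤ (2 ^ k : ℝ) / 2 ^ (2 * k) := by gcongr
        _ = 1 / 2 ^ k := by
            rw [two_mul, pow_add]
            field_simp
  · -- cardinality
    rw [kerdockSphericalCode]
    have hSfin : ((fun (c : Fin (2 ^ (2 * k)) → Bool) =>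
        (WithLp.equiv 2 (Fin (2 ^ (2 * k)) → ℝ)).symm
          fun i => (if c i then (-1 : ℝ) else 1) / 2 ^ k) '' ↑K).Finite :=
      (K.finite_toSet).image _
    have himg : (fun (c : Fin (2 ^ (2 * k)) → Bool) =>
        (WithLp.equiv 2 (Fin (2 ^ (2 * k)) → ℝ)).symm
          fun i => (if c i then (-1 : ℝ) else 1) / 2 ^ k) = kerdockSign k := rfl
    rw [Set.ncard_union_eq ?disj (Set.Finite.union (Set.finite_range _) (Set.finite_range _))
      hSfin]
    case disj =>
      rw [Set.disjoint_union_left]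
      constructor
      · rw [Set.disjoint_left]
        rintro x ⟨i, rfl⟩ ⟨c, hc, hx⟩
        exact hes i c (by rw [himg] at hx; exact hx.symm)
      · rw [Set.disjoint_left]
        rintro x ⟨i, rfl⟩ ⟨c, hc, hx⟩
        exact hnes i c (by rw [himg] at hx; exact hx.symm)
    rw [Set.ncard_union_eq ?disj2 (Set.finite_range _) (Set.finite_range _)]
    case disj2 =>
      rw [Set.disjoint_left]
      rintro x ⟨i, rfl⟩ ⟨j, hj⟩
      exact hen i j hj.symm
    have hr1 : (Set.range fun i : Fin (2 ^ (2 * k)) =>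
        EuclideanSpace.single i (1:ℝ)).ncard = 2 ^ (2 * k) := by
      rw [← Set.image_univ, Set.ncard_image_of_injective _ hsingle_inj, Set.ncard_univ]
      simp
    have hneg_inj : Function.Injective
        (fun i : Fin (2 ^ (2 * k)) => -EuclideanSpace.single i (1:ℝ)) := by
      intro i j h
      exact hsingle_inj (neg_injective h)
    have hr2 : (Set.range fun i : Fin (2 ^ (2 * k)) =>
        -EuclideanSpace.single i (1:ℝ)).ncard = 2 ^ (2 * k) := by
      rw [← Set.image_univ, Set.ncard_image_of_injective _ hneg_inj, Set.ncard_univ]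
      simp
    have hr3 : ((fun (c : Fin (2 ^ (2 * k)) → Bool) =>
        (WithLp.equiv 2 (Fin (2 ^ (2 * k)) → ℝ)).symm
          fun i => (if c i then (-1 : ℝ) else 1) / 2 ^ k) '' ↑K).ncard = K.card := by
      rw [himg, Set.ncard_image_of_injective _ (kerdockSign_injective k),
        Set.ncard_coe_finset]
    rw [hr1, hr2, hr3, pow_succ]
    ring
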